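/- Let G be a c-edge-colored multigraph, c ≥ 3, in which every vertex is incident to at least two edges of different colors, at least one vertex is incident to at least three edges of pairwise different colors, and δ_dym(x) ≥ (n + 1)/2 for every vertex x (n = |V(G)|). Then G has a properly colored hamiltonian cycle. -/

import Mathlib

/-- A loopless multigraph whose edges are colored by vertices of a graph `H`
(given by the adjacency relation `adjH` on the color type `C`). -/
structure HCMultigraph (V C : Type) where
  E : Type
  ends : E → Sym2 V
  loopless : ∀ e, ¬ (ends e).IsDiag
  col : E → C

namespace HCMultigraph

variable {V C : Type} (adjH : C → C → Prop) (M : HCMultigraph V C)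

/-- `E_{uv}`: the set of edges of `M` with end vertices `u` and `v`. -/
def EdgesBetween (u v : V) : Set M.E := {e | M.ends e = s(u, v)}

/-- The neighborhood in `H` of a color. -/
def NH (a : C) : Set C := {b | adjH a b}

/-- `E_{uv}` is a dynamic edge set: it contains two edges whose colors have
incomparable neighborhoods in `H`. -/
def DynamicEdgeSet (u v : V) : Prop :=
  ∃ e ∈ M.EdgesBetween u v, ∃ f ∈ M.EdgesBetween u v,
    ¬ NH adjH (M.col e) ⊆ NH adjH (M.col f) ∧
    ¬ NH adjH (M.col f) ⊆ NH adjH (M.col e)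

/-- The set of edges incident with `u` (vertex set of the auxiliary graph `G_u`). -/
def Incident (u : V) : Set M.E := {e | u ∈ M.ends e}

/-- The auxiliary graph `G_u` (edges incident with `u`, adjacency given by
adjacency of colors in `H`) is a complete multipartite graph with at least `k`
(nonempty) parts. -/
def CompleteMultipartite (k : ℕ) (u : V) : Prop :=
  ∃ p : M.Incident u → ℕ,
    (∀ a b : M.Incident u, a ≠ b →
      (adjH (M.col a.1) (M.col b.1) ↔ p a ≠ p b)) ∧
    k ≤ (Set.range p).ncard

/-- The dynamic degree of `u`: the number of vertices `v` such that `E_{uv}` is a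
dynamic edge set. -/
noncomputable def dynDegree (u : V) : ℕ := {v | M.DynamicEdgeSet adjH u v}.ncard

/-- An `H`-path of length `k`: distinct vertices `x 0, …, x k`, edges
`e i ∈ E_{x i, x (i+1)}`, consecutive edge colors adjacent in `H`. -/
def IsHPath (k : ℕ) (x : ℕ → V) (e : ℕ → M.E) : Prop :=
  (∀ i ≤ k, ∀ j ≤ k, x i = x j → i = j) ∧
  (∀ i < k, e i ∈ M.EdgesBetween (x i) (x (i + 1))) ∧
  (∀ i, i + 1 < k → adjH (M.col (e i)) (M.col (e (i + 1))))

/-- An `H`-cycle of length `k + 1`: distinct vertices `x 0, …, x k`, edges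
`e i ∈ E_{x i, x (i+1)}` and `e k ∈ E_{x k, x 0}`, with consecutive edge colors
(cyclically) adjacent in `H`. -/
def IsHCycle (k : ℕ) (x : ℕ → V) (e : ℕ → M.E) : Prop :=
  (∀ i ≤ k, ∀ j ≤ k, x i = x j → i = j) ∧
  (∀ i < k, e i ∈ M.EdgesBetween (x i) (x (i + 1))) ∧
  e k ∈ M.EdgesBetween (x k) (x 0) ∧
  (∀ i < k, adjH (M.col (e i)) (M.col (e (i + 1)))) ∧
  adjH (M.col (e k)) (M.col (e 0))

/-- A dynamic `H`-cycle with at most one change, on the distinct vertices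
`x 0, …, x k` (of length `k + 1`): either a genuine (closed) `H`-cycle, or an
`H`-path closed up with two parallel edges `e k, g ∈ E_{x k, x 0}` (one change). -/
def DynCycleOneChange (k : ℕ) (x : ℕ → V) : Prop :=
  (∀ i ≤ k, ∀ j ≤ k, x i = x j → i = j) ∧
  ∃ e : ℕ → M.E,
    (∀ i < k, e i ∈ M.EdgesBetween (x i) (x (i + 1))) ∧
    e k ∈ M.EdgesBetween (x k) (x 0) ∧
    (∀ i < k, adjH (M.col (e i)) (M.col (e (i + 1)))) ∧
    (adjH (M.col (e k)) (M.col (e 0)) ∨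
      ∃ g ∈ M.EdgesBetween (x k) (x 0), adjH (M.col g) (M.col (e 0)))

end HCMultigraph

open HCMultigraph

namespace Stmt15Aux

set_option linter.unusedSectionVars false

open HCMultigraph

section Mlemmas

variable {V : Type} {c : ℕ} (M : HCMultigraph V (Fin c))

/-- The set of colors appearing on edges between `u` and `v`. -/
def colSet (u v : V) : Set (Fin c) := M.col '' (M.EdgesBetween u v)

lemma edgesBetween_comm (u v : V) : M.EdgesBetween u v = M.EdgesBetween v u := by
  ext e
  simp only [HCMultigraph.EdgesBetween, Set.mem_setOf_eq]
  rw [Sym2.eq_swap]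

lemma colSet_comm (u v : V) : colSet M u v = colSet M v u := by
  unfold colSet; rw [edgesBetween_comm]

lemma nh_not_subset {a b : Fin c} (hab : a ≠ b) :
    ¬ NH (fun a b : Fin c => a ≠ b) a ⊆ NH (fun a b : Fin c => a ≠ b) b := by
  intro hsub
  have hb : b ∈ NH (fun a b : Fin c => a ≠ b) a := hab
  have : b ∈ NH (fun a b : Fin c => a ≠ b) b := hsub hb
  exact this rfl

lemma dyn_iff (u v : V) :
    M.DynamicEdgeSet (fun a b : Fin c => a ≠ b) u v ↔
      ∃ x ∈ colSet M u v, ∃ y ∈ colSet M u v, x ≠ y := by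
  constructor
  · rintro ⟨e, he, f, hf, h1, _⟩
    refine ⟨M.col e, ⟨e, he, rfl⟩, M.col f, ⟨f, hf, rfl⟩, ?_⟩
    intro h
    exact h1 (by rw [h])
  · rintro ⟨x, ⟨e, he, rfl⟩, y, ⟨f, hf, rfl⟩, hxy⟩
    exact ⟨e, he, f, hf, nh_not_subset hxy, nh_not_subset (Ne.symm hxy)⟩

lemma dyn_symm {u v : V} (h : M.DynamicEdgeSet (fun a b : Fin c => a ≠ b) u v) :
    M.DynamicEdgeSet (fun a b : Fin c => a ≠ b) v u := by
  unfold HCMultigraph.DynamicEdgeSet at h ⊢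
  rwa [edgesBetween_comm]

lemma dyn_irrefl (u : V) : ¬ M.DynamicEdgeSet (fun a b : Fin c => a ≠ b) u u := by
  rintro ⟨e, he, -⟩
  exact M.loopless e (by rw [he]; exact Sym2.mk_isDiag_iff.2 rfl)

lemma dyn_ne {u v : V} (h : M.DynamicEdgeSet (fun a b : Fin c => a ≠ b) u v) : u ≠ v := by
  rintro rfl; exact dyn_irrefl M u h

end Mlemmas

section Comb

variable {V : Type} [Fintype V]

def AInj (k : ℕ) (x : ℕ → V) : Prop := ∀ i ≤ k, ∀ j ≤ k, x i = x j → i = j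
def ACov (k : ℕ) (x : ℕ → V) : Prop := ∀ v : V, ∃ i ≤ k, x i = v
def UCyc (R : V → V → Prop) (n : ℕ) (x : ℕ → V) : Prop :=
  ∀ i ≤ n - 1, R (x i) (x ((i + 1) % n))

lemma rot {n : ℕ} (hn : 3 ≤ n) (R : V → V → Prop) (x : ℕ → V)
    (hinj : AInj (n - 1) x) (hcov : ACov (n - 1) x) (hcyc : UCyc R n x) (s : ℕ) :
    AInj (n - 1) (fun i => x ((i + s) % n)) ∧ ACov (n - 1) (fun i => x ((i + s) % n)) ∧
      UCyc R n (fun i => x ((i + s) % n)) := by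
  have hn0 : 0 < n := by omega
  refine ⟨?_, ?_, ?_⟩
  · intro i hi j hj h
    have h1 : (i + s) % n = (j + s) % n := by
      refine hinj _ ?_ _ ?_ h
      · have := Nat.mod_lt (i + s) hn0; omega
      · have := Nat.mod_lt (j + s) hn0; omega
    have h2 : i ≡ j [MOD n] := Nat.ModEq.add_right_cancel' s h1
    exact h2.eq_of_lt_of_lt (by omega) (by omega)
  · intro v
    obtain ⟨t, ht, hxt⟩ := hcov v
    refine ⟨(t + (n - s % n)) % n, by have := Nat.mod_lt (t + (n - s % n)) hn0; omega, ?_⟩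
    simp only []
    have hsm : s % n < n := Nat.mod_lt s hn0
    have hdm : n * (s / n) + s % n = s := Nat.div_add_mod s n
    have key : ((t + (n - s % n)) % n + s) % n = t := by
      rw [Nat.mod_add_mod]
      have h2 : t + (n - s % n) + s = (t + n) + n * (s / n) := by omega
      rw [h2, Nat.add_mul_mod_self_left, Nat.add_mod_right, Nat.mod_eq_of_lt (by omega)]
    rw [key]; exact hxt
  · intro i hi
    simp only []
    have e1 : ((i + 1) % n + s) % n = (i + 1 + s) % n := Nat.mod_add_mod (i + 1) n s
    have e2 : ((i + s) % n + 1) % n = (i + 1 + s) % n := by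
      rw [Nat.mod_add_mod]; congr 1; omega
    have ha : (i + s) % n ≤ n - 1 := by have := Nat.mod_lt (i + s) hn0; omega
    have := hcyc _ ha
    rw [e2] at this
    rw [e1]
    exact this

end Comb

end Stmt15Aux

namespace Stmt15Aux
section Dirac

variable {V : Type} [Fintype V]

lemma complete_case {n : ℕ} (hcard : Fintype.card V = n) (hn : 3 ≤ n)
    (R : V → V → Prop) (hcomp : ∀ a b : V, a ≠ b → R a b) :
    ∃ x : ℕ → V, AInj (n - 1) x ∧ ACov (n - 1) x ∧ UCyc R n x := by
  have hn0 : 0 < n := by omega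
  have e : Fin n ≃ V := (finCongr hcard.symm).trans (Fintype.equivFin V).symm
  refine ⟨fun i => e ⟨i % n, Nat.mod_lt _ hn0⟩, ?_, ?_, ?_⟩
  · intro i hi j hj h
    have := e.injective h
    have h2 : i % n = j % n := by simpa using this
    rwa [Nat.mod_eq_of_lt (by omega), Nat.mod_eq_of_lt (by omega)] at h2
  · intro v
    refine ⟨(e.symm v).val, by have := (e.symm v).isLt; omega, ?_⟩
    simp only [Nat.mod_eq_of_lt (e.symm v).isLt]
    simp
  · intro i hi
    apply hcomp
    intro h
    have := e.injective h
    have h2 : i % n = (i + 1) % n := by simpa using this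
    rw [Nat.mod_eq_of_lt (by omega)] at h2
    rcases Nat.lt_or_ge (i+1) n with h3 | h3
    · rw [Nat.mod_eq_of_lt h3] at h2; omega
    · have h4 : i + 1 = n := by omega
      rw [h4, Nat.mod_self] at h2; omega

lemma exists_equiv {n : ℕ} (hcard : Fintype.card V = n) (hn : 3 ≤ n)
    (x : ℕ → V) (hinj : AInj (n - 1) x) :
    ∃ E : Fin n ≃ V, ∀ t : Fin n, E t = x t.val := by
  have hbij : Function.Bijective (fun t : Fin n => x t.val) := by
    rw [Fintype.bijective_iff_injective_and_card]
    constructor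
    · intro t t' h
      exact Fin.ext (hinj _ (by omega) _ (by omega) h)
    · simp [hcard]
  exact ⟨Equiv.ofBijective _ hbij, fun t => rfl⟩

open Classical in
lemma ncard_eq_filter (R : V → V → Prop) (a : V) :
    {w | R a w}.ncard = (Finset.univ.filter (fun w => R a w)).card := by
  classical
  rw [Set.ncard_eq_toFinset_card]
  · congr 1
    ext w
    simp

lemma core {n : ℕ} (hcard : Fintype.card V = n) (hn : 3 ≤ n)
    (R : V → V → Prop) (hsym : ∀ a b, R a b → R b a) (hirr : ∀ a, ¬ R a a)
    (hdeg : ∀ v, n + 1 ≤ 2 * {w | R v w}.ncard)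
    (u v : V) (huv : ¬ R u v) (hne : u ≠ v)
    (p : ℕ → V) (hinj : AInj (n - 1) p) (hcov : ACov (n - 1) p)
    (hp0 : p 0 = v) (hpk : p (n - 1) = u)
    (hpath : ∀ i < n - 1, R (p i) (p (i + 1))) :
    ∃ y : ℕ → V, AInj (n - 1) y ∧ ACov (n - 1) y ∧ UCyc R n y := by
  classical
  set k := n - 1 with hk
  obtain ⟨E, hE⟩ := exists_equiv hcard hn p hinj
  have hpos : ∀ w : V, p (E.symm w).val = w := by
    intro w
    have := hE (E.symm w)
    rw [E.apply_symm_apply] at this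
    exact this.symm
  have hposlt : ∀ w : V, (E.symm w).val < n := fun w => (E.symm w).isLt
  set A : Finset ℕ := (Finset.range k).filter (fun t => R u (p t)) with hA
  set B : Finset ℕ := (Finset.range k).filter (fun t => R v (p (t + 1))) with hB
  have hAcard : {w | R u w}.ncard ≤ A.card := by
    rw [ncard_eq_filter]
    apply Finset.card_le_card_of_injOn (fun w => (E.symm w).val)
    · intro w hw
      simp only [Finset.mem_coe] at hw ⊢
      simp only [Finset.mem_filter, Finset.mem_univ, true_and] at hw
      have hw1 : w ≠ u := fun hh => hirr u (hh ▸ hw)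
      have hw2 : w ≠ v := fun hh => huv (hh ▸ hw)
      have hne0 : (E.symm w).val ≠ 0 := by
        intro h0; apply hw2; rw [← hpos w, h0, hp0]
      have hnek : (E.symm w).val ≠ k := by
        intro h0; apply hw1; rw [← hpos w, h0, hpk]
      simp only [hA, Finset.mem_filter, Finset.mem_range]
      constructor
      · have := hposlt w; omega
      · rw [hpos w]; exact hw
    · intro w _ w' _ h
      dsimp only at h
      have : E.symm w = E.symm w' := Fin.ext h
      exact E.symm.injective this
  have hBcard : {w | R v w}.ncard ≤ B.card := by
    rw [ncard_eq_filter]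
    apply Finset.card_le_card_of_injOn (fun w => (E.symm w).val - 1)
    · intro w hw
      simp only [Finset.mem_coe] at hw ⊢
      simp only [Finset.mem_filter, Finset.mem_univ, true_and] at hw
      have hw1 : w ≠ v := fun hh => hirr v (hh ▸ hw)
      have hw2 : w ≠ u := fun hh => huv (hsym v u (hh ▸ hw))
      have hne0 : (E.symm w).val ≠ 0 := by
        intro h0; apply hw1; rw [← hpos w, h0, hp0]
      have hnek : (E.symm w).val ≠ k := by
        intro h0; apply hw2; rw [← hpos w, h0, hpk]
      simp only [hB, Finset.mem_filter, Finset.mem_range]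
      have hlt := hposlt w
      constructor
      · omega
      · have h1 : (E.symm w).val - 1 + 1 = (E.symm w).val := by omega
        rw [h1, hpos w]; exact hw
    · intro w hw w' hw' h
      dsimp only at h
      simp only [Finset.mem_coe, Finset.mem_filter, Finset.mem_univ, true_and] at hw hw'
      have hne0 : (E.symm w).val ≠ 0 := by
        intro h0
        have hwv : w = v := by rw [← hpos w, h0, hp0]
        rw [hwv] at hw; exact hirr v hw
      have hne0' : (E.symm w').val ≠ 0 := by
        intro h0
        have hwv : w' = v := by rw [← hpos w', h0, hp0]
        rw [hwv] at hw'; exact hirr v hw'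
      have : (E.symm w).val = (E.symm w').val := by omega
      exact E.symm.injective (Fin.ext this)
  have hdu := hdeg u
  have hdv := hdeg v
  have hnonempty : (A ∩ B).Nonempty := by
    rw [← Finset.card_pos]
    have hun : (A ∪ B).card ≤ k := by
      apply le_trans (Finset.card_le_card _) (by rw [Finset.card_range])
      intro t ht
      rcases Finset.mem_union.1 ht with h | h
      · exact Finset.mem_of_mem_filter _ h
      · exact Finset.mem_of_mem_filter _ h
    have := Finset.card_union_add_card_inter A B
    omega
  obtain ⟨t, ht⟩ := hnonempty
  rw [Finset.mem_inter] at ht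
  have htA : t < k ∧ R u (p t) := by
    have := ht.1; rw [hA, Finset.mem_filter, Finset.mem_range] at this; exact this
  have htB : R v (p (t + 1)) := by
    have := ht.2; rw [hB, Finset.mem_filter] at this; exact this.2
  obtain ⟨htk, htu⟩ := htA
  -- the surgery
  refine ⟨fun i => if i ≤ t then p i else p (k + t + 1 - i), ?_, ?_, ?_⟩
  · intro i hi j hj h
    simp only [] at h
    split_ifs at h with h1 h2 h2
    · exact hinj _ hi _ hj h
    · have := hinj _ hi _ (by omega) h; omega
    · have := hinj _ (by omega) _ hj h; omega
    · have := hinj _ (by omega) _ (by omega) h; omega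
  · intro w
    obtain ⟨s, hs, hps⟩ := hcov w
    by_cases hst : s ≤ t
    · exact ⟨s, by omega, by simp only [if_pos hst]; exact hps⟩
    · refine ⟨k + t + 1 - s, by omega, ?_⟩
      have : ¬ (k + t + 1 - s ≤ t) := by omega
      simp only [if_neg this]
      have h1 : k + t + 1 - (k + t + 1 - s) = s := by omega
      rw [h1]; exact hps
  · intro i hi
    simp only []
    have hik : i ≤ k := hi
    by_cases hit : i < t
    · have h1 : i ≤ t := by omega
      have h2 : (i + 1) % n = i + 1 := Nat.mod_eq_of_lt (by omega)
      have h3 : i + 1 ≤ t := by omega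
      rw [if_pos h1, h2, if_pos h3]
      exact hpath i (by omega)
    · by_cases hit2 : i = t
      · subst hit2
        have h2 : (i + 1) % n = i + 1 := Nat.mod_eq_of_lt (by omega)
        rw [if_pos (le_refl i), h2, if_neg (by omega)]
        have h3 : k + i + 1 - (i + 1) = k := by omega
        rw [h3, hpk]
        exact hsym _ _ htu
      · -- i > t
        have hgt : t < i := by omega
        by_cases hik2 : i < k
        · have h2 : (i + 1) % n = i + 1 := Nat.mod_eq_of_lt (by omega)
          rw [if_neg (by omega), h2, if_neg (by omega)]
          have h3 : k + t + 1 - (i + 1) + 1 = k + t + 1 - i := by omega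
          have := hpath (k + t + 1 - (i + 1)) (by omega)
          rw [h3] at this
          exact hsym _ _ this
        · have hik3 : i = k := by omega
          subst hik3
          have h2 : (k + 1) % n = 0 := by
            have hkn : k + 1 = n := by omega
            rw [hkn, Nat.mod_self]
          rw [if_neg (by omega), h2, if_pos (by omega)]
          have h3 : k + t + 1 - k = t + 1 := by omega
          rw [h3, hp0]
          exact hsym _ _ htB

end Dirac
end Stmt15Aux

namespace Stmt15Aux
section Dirac2

variable {V : Type} [Fintype V]

lemma dirac {n : ℕ} (hcard : Fintype.card V = n) (hn : 3 ≤ n)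
    (R : V → V → Prop) (hsym : ∀ a b, R a b → R b a) (hirr : ∀ a, ¬ R a a)
    (hdeg : ∀ v, n + 1 ≤ 2 * {w | R v w}.ncard) :
    ∃ x : ℕ → V, AInj (n - 1) x ∧ ACov (n - 1) x ∧ UCyc R n x := by
  classical
  suffices H : ∀ m : ℕ, ∀ R : V → V → Prop, (∀ a b, R a b → R b a) → (∀ a, ¬ R a a) →
      (∀ v, n + 1 ≤ 2 * {w | R v w}.ncard) →
      {q : V × V | q.1 ≠ q.2 ∧ ¬ R q.1 q.2}.ncard ≤ m →
      ∃ x : ℕ → V, AInj (n - 1) x ∧ ACov (n - 1) x ∧ UCyc R n x by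
    exact H _ R hsym hirr hdeg le_rfl
  intro m
  induction m with
  | zero =>
    intro R hsym hirr hdeg hm
    have hempty : {q : V × V | q.1 ≠ q.2 ∧ ¬ R q.1 q.2} = ∅ := by
      rw [← Set.ncard_eq_zero (Set.toFinite _)]
      omega
    apply complete_case hcard hn R
    intro a b hab
    by_contra hR
    have : (a, b) ∈ {q : V × V | q.1 ≠ q.2 ∧ ¬ R q.1 q.2} := ⟨hab, hR⟩
    rw [hempty] at this
    exact this
  | succ m ih =>
    intro R hsym hirr hdeg hm
    by_cases hcomp : ∀ a b : V, a ≠ b → R a b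
    · exact complete_case hcard hn R hcomp
    · push_neg at hcomp
      obtain ⟨u, v, hne, huv⟩ := hcomp
      set R' : V → V → Prop := fun a b => R a b ∨ (a = u ∧ b = v) ∨ (a = v ∧ b = u) with hR'
      have hsym' : ∀ a b, R' a b → R' b a := by
        rintro a b (h | ⟨rfl, rfl⟩ | ⟨rfl, rfl⟩)
        · exact Or.inl (hsym _ _ h)
        · exact Or.inr (Or.inr ⟨rfl, rfl⟩)
        · exact Or.inr (Or.inl ⟨rfl, rfl⟩)
      have hirr' : ∀ a, ¬ R' a a := by
        rintro a (h | ⟨h1, h2⟩ | ⟨h1, h2⟩)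
        · exact hirr a h
        · subst h1; exact hne h2
        · subst h1; exact hne h2.symm
      have hdeg' : ∀ w, n + 1 ≤ 2 * {z | R' w z}.ncard := by
        intro w
        refine le_trans (hdeg w) ?_
        have hsub : {z | R w z} ⊆ {z | R' w z} := fun z hz => Or.inl hz
        have := Set.ncard_le_ncard hsub (Set.toFinite _)
        omega
      have hmeas : {q : V × V | q.1 ≠ q.2 ∧ ¬ R' q.1 q.2}.ncard ≤ m := by
        have hss : {q : V × V | q.1 ≠ q.2 ∧ ¬ R' q.1 q.2} ⊂ {q : V × V | q.1 ≠ q.2 ∧ ¬ R q.1 q.2} := by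
          constructor
          · rintro ⟨a, b⟩ ⟨h1, h2⟩
            exact ⟨h1, fun hR => h2 (Or.inl hR)⟩
          · intro hsub
            have : (u, v) ∈ {q : V × V | q.1 ≠ q.2 ∧ ¬ R q.1 q.2} := ⟨hne, huv⟩
            have h2 := hsub this
            exact h2.2 (Or.inr (Or.inl ⟨rfl, rfl⟩))
        have := Set.ncard_lt_ncard hss (Set.toFinite _)
        omega
      obtain ⟨x, hxinj, hxcov, hxcyc⟩ := ih R' hsym' hirr' hdeg' hmeas
      by_cases hgood : ∀ i ≤ n - 1, R (x i) (x ((i + 1) % n))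
      · exact ⟨x, hxinj, hxcov, hgood⟩
      · push_neg at hgood
        obtain ⟨i₀, hi₀, hbad⟩ := hgood
        have hpair := hxcyc i₀ hi₀
        rw [hR'] at hpair
        have hpair' : (x i₀ = u ∧ x ((i₀ + 1) % n) = v) ∨ (x i₀ = v ∧ x ((i₀ + 1) % n) = u) := by
          rcases hpair with h | h | h
          · exact absurd h hbad
          · exact Or.inl h
          · exact Or.inr h
        -- rotate so that position 0 is the successor of i₀
        obtain ⟨hinj2, hcov2, hcyc2⟩ := rot hn R' x hxinj hxcov hxcyc (i₀ + 1)
        set p : ℕ → V := fun i => x ((i + (i₀ + 1)) % n) with hp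
        have hn0 : 0 < n := by omega
        have hp0 : p 0 = x ((i₀ + 1) % n) := by
          simp only [hp, Nat.zero_add]
        have hpk : p (n - 1) = x i₀ := by
          simp only [hp]
          congr 1
          have h1 : n - 1 + (i₀ + 1) = n + i₀ := by omega
          rw [h1, Nat.add_comm n i₀, Nat.add_mod_right]
          exact Nat.mod_eq_of_lt (by omega)
        -- path edges of p avoid the pair {u,v}
        have hk2 : 2 ≤ n - 1 := by omega
        have hxiu : ∀ a b : V, x i₀ = a → x ((i₀ + 1) % n) = b → ¬ R a b →
            ((a = u ∧ b = v) ∨ (a = v ∧ b = u)) →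
            ∃ y : ℕ → V, AInj (n - 1) y ∧ ACov (n - 1) y ∧ UCyc R n y := by
          intro a b hxa hxb hab hcase
          have hpa : p (n - 1) = a := by rw [hpk, hxa]
          have hpb : p 0 = b := by rw [hp0, hxb]
          have posu : ∀ s ≤ n - 1, p s = a → s = n - 1 := by
            intro s hs h
            exact hinj2 s hs (n - 1) le_rfl (by rw [h, ← hpa])
          have posv : ∀ s ≤ n - 1, p s = b → s = 0 := by
            intro s hs h
            exact hinj2 s hs 0 (by omega) (by rw [h, ← hpb])
          have hpath : ∀ i < n - 1, R (p i) (p (i + 1)) := by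
            intro i hilt
            have hcy := hcyc2 i (by omega)
            have hmod : (i + 1) % n = i + 1 := Nat.mod_eq_of_lt (by omega)
            rw [hmod] at hcy
            rcases hcy with h | ⟨h1, h2⟩ | ⟨h1, h2⟩
            · exact h
            · -- p i = u, p (i+1) = v
              exfalso
              rcases hcase with ⟨hau, hbv⟩ | ⟨hav, hbu⟩
              · have := posu i (by omega) (by rw [h1, ← hau]); omega
              · have e0 := posv i (by omega) (by rw [h1, ← hbu])
                have e1 := posu (i + 1) (by omega) (by rw [h2, ← hav])
                omega
            · -- p i = v, p (i+1) = u
              exfalso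
              rcases hcase with ⟨hau, hbv⟩ | ⟨hav, hbu⟩
              · have e0 := posv i (by omega) (by rw [h1, ← hbv])
                have e1 := posu (i + 1) (by omega) (by rw [h2, ← hau])
                omega
              · have := posu i (by omega) (by rw [h1, ← hav]); omega
          exact core hcard hn R hsym hirr hdeg a b hab
            (by rcases hcase with ⟨h1, h2⟩ | ⟨h1, h2⟩ <;> (subst h1; subst h2)
                · exact hne
                · exact hne.symm)
            p hinj2 hcov2 hpb hpa hpath
        rcases hpair' with ⟨ha, hb⟩ | ⟨ha, hb⟩
        · exact hxiu u v ha hb huv (Or.inl ⟨rfl, rfl⟩)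
        · exact hxiu v u ha hb (fun h => huv (hsym _ _ h)) (Or.inr ⟨rfl, rfl⟩)

end Dirac2
end Stmt15Aux

namespace Stmt15Aux
section Color

variable {α : Type}

/-- Key cyclic list-coloring lemma: position 0 gets a fixed color `s` which does not
occur in list 1; all other lists have two distinct elements. -/
lemma cyc_color {k : ℕ} (hk : 2 ≤ k) (L : ℕ → Set α)
    (h2 : ∀ i, 1 ≤ i → i ≤ k → ∃ a ∈ L i, ∃ b ∈ L i, a ≠ b)
    (s : α) (hs : s ∈ L 0) (hs1 : s ∉ L 1) :
    ∃ f : ℕ → α, (∀ i ≤ k, f i ∈ L i) ∧ (∀ i < k, f i ≠ f (i + 1)) ∧ f k ≠ f 0 := by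
  classical
  have pick : ∀ i, 1 ≤ i → i ≤ k → ∀ z : α, ∃ a, a ∈ L i ∧ a ≠ z := by
    intro i hi1 hi2 z
    obtain ⟨a, ha, b, hb, hab⟩ := h2 i hi1 hi2
    by_cases hza : a = z
    · exact ⟨b, hb, by rw [← hza]; exact hab.symm⟩
    · exact ⟨a, ha, hza⟩
  let Cf : α → ℕ → α := fun z i =>
    if h : 1 ≤ i ∧ i ≤ k then (pick i h.1 h.2 z).choose else z
  have Cf_spec : ∀ z i, 1 ≤ i → i ≤ k → Cf z i ∈ L i ∧ Cf z i ≠ z := by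
    intro z i h1 h2'
    have : Cf z i = (pick i h1 h2' z).choose := by
      simp only [Cf, dif_pos (And.intro h1 h2')]
    rw [this]
    exact (pick i h1 h2' z).choose_spec
  let aux : ℕ → α := fun j => Nat.rec (Cf s k) (fun j prev => Cf prev (k - j - 1)) j
  have aux_zero : aux 0 = Cf s k := rfl
  have aux_succ : ∀ j, aux (j + 1) = Cf (aux j) (k - j - 1) := fun j => rfl
  set f : ℕ → α := fun i => if i = 0 then s else aux (k - i) with hf
  have fk : f k = Cf s k := by
    simp only [hf, if_neg (by omega : ¬ (k = 0)), Nat.sub_self, aux_zero]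
  have fmid : ∀ i, 1 ≤ i → i ≤ k - 1 → f i = Cf (f (i + 1)) i := by
    intro i h1 h2'
    have e1 : k - i = (k - i - 1) + 1 := by omega
    have e2 : f i = aux (k - i) := by simp only [hf, if_neg (by omega : ¬ (i = 0))]
    have e3 : k - (k - i - 1) - 1 = i := by omega
    have e0 : k - (i + 1) = k - i - 1 := by omega
    have e4 : f (i + 1) = aux (k - i - 1) := by
      simp only [hf, if_neg (by omega : ¬ (i + 1 = 0)), e0]
    rw [e2, e1, aux_succ, e3, e4]
  have fmem : ∀ i ≤ k, f i ∈ L i := by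
    intro i hi
    by_cases h0 : i = 0
    · subst h0; simp only [hf, if_pos rfl]; exact hs
    · by_cases hik : i = k
      · rw [hik, fk]; exact (Cf_spec s k (by omega) le_rfl).1
      · rw [fmid i (by omega) (by omega)]
        exact (Cf_spec _ i (by omega) (by omega)).1
  have fstep : ∀ i, 1 ≤ i → i ≤ k - 1 → f i ≠ f (i + 1) := by
    intro i h1 h2'
    rw [fmid i h1 h2']
    exact (Cf_spec _ i (by omega) (by omega)).2
  refine ⟨f, fmem, ?_, ?_⟩
  · intro i hi
    by_cases h0 : i = 0
    · subst h0
      have h1 : f 1 ∈ L 1 := fmem 1 (by omega)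
      intro h
      rw [show (0:ℕ) + 1 = 1 from rfl] at h
      have hf0 : f 0 = s := by simp only [hf, if_pos rfl]
      rw [hf0] at h
      rw [← h] at h1
      exact hs1 h1
    · exact fstep i (by omega) (by omega)
  · rw [fk]
    simp only [hf, if_pos rfl]
    exact (Cf_spec s k (by omega) le_rfl).2

/-- Cyclic coloring when all lists are equal to a set with three distinct elements. -/
lemma cyc_color_three {k : ℕ} (hk : 2 ≤ k) (S : Set α) (a b d : α)
    (ha : a ∈ S) (hb : b ∈ S) (hd : d ∈ S) (hab : a ≠ b) (had : a ≠ d) (hbd : b ≠ d) :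
    ∃ f : ℕ → α, (∀ i ≤ k, f i ∈ S) ∧ (∀ i < k, f i ≠ f (i + 1)) ∧ f k ≠ f 0 := by
  refine ⟨fun i => if i = k then d else if i % 2 = 0 then a else b, ?_, ?_, ?_⟩
  · intro i _
    dsimp only
    split_ifs <;> assumption
  · intro i hi
    dsimp only
    rw [if_neg (by omega : ¬ (i = k))]
    by_cases h1 : i + 1 = k
    · rw [if_pos h1]
      split_ifs <;> [exact had; exact hbd]
    · rw [if_neg h1]
      rcases Nat.even_or_odd i with he | ho
      · have e1 : i % 2 = 0 := Nat.even_iff.1 he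
        have e2 : ¬ ((i + 1) % 2 = 0) := by omega
        rw [if_pos e1, if_neg e2]; exact hab
      · have e1 : ¬ (i % 2 = 0) := by
          have := Nat.odd_iff.1 ho; omega
        have e2 : (i + 1) % 2 = 0 := by
          have := Nat.odd_iff.1 ho; omega
        rw [if_neg e1, if_pos e2]; exact hab.symm
  · dsimp only
    rw [if_pos rfl, if_neg (by omega : ¬ (0 = k)), if_pos (by omega : 0 % 2 = 0)]
    exact had.symm

/-- If every list is contained in the (cyclically) next one, all lists equal the first. -/
lemma all_eq_of_sub {n k : ℕ} (hk : k = n - 1) (hn : 3 ≤ n) (L : ℕ → Set α)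
    (hsub : ∀ i ≤ k, L i ⊆ L ((i + 1) % n)) : ∀ i ≤ k, L i = L 0 := by
  have up : ∀ i ≤ k, L 0 ⊆ L i := by
    intro i
    induction i with
    | zero => intro _; exact subset_rfl
    | succ j ihj =>
      intro hj
      have h1 : L 0 ⊆ L j := ihj (by omega)
      have h2 : L j ⊆ L ((j + 1) % n) := hsub j (by omega)
      have h3 : (j + 1) % n = j + 1 := Nat.mod_eq_of_lt (by omega)
      rw [h3] at h2
      exact h1.trans h2
  have wrap : L k ⊆ L 0 := by
    have := hsub k le_rfl
    have h3 : (k + 1) % n = 0 := by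
      have : k + 1 = n := by omega
      rw [this, Nat.mod_self]
    rwa [h3] at this
  have down : ∀ j, ∀ i, i + j = k → L i ⊆ L 0 := by
    intro j
    induction j with
    | zero => intro i hi; have : i = k := by omega
              subst this; exact wrap
    | succ j ihj =>
      intro i hi
      have h2 : L i ⊆ L ((i + 1) % n) := hsub i (by omega)
      have h3 : (i + 1) % n = i + 1 := Nat.mod_eq_of_lt (by omega)
      rw [h3] at h2
      exact h2.trans (ihj (i + 1) (by omega))
  intro i hi
  exact Set.Subset.antisymm (down (k - i) i (by omega)) (up i hi)

end Color
end Stmt15Aux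

namespace Stmt15Aux
section BadCross

variable {V : Type} [Fintype V]

lemma badcross {n : ℕ} (hcard : Fintype.card V = n) (hn : 3 ≤ n)
    (R : V → V → Prop) (hsym : ∀ a b, R a b → R b a) (hirr : ∀ a, ¬ R a a)
    (hdeg : ∀ v, n + 1 ≤ 2 * {w | R v w}.ncard)
    (x : ℕ → V) (hinj : AInj (n - 1) x)
    (j : ℕ) (hj1 : 2 ≤ j) (hj2 : j ≤ n - 2) :
    (∃ p, j + 1 ≤ p ∧ p ≤ n - 1 ∧ R (x 1) (x p) ∧ R (x (j + 1)) (x ((p + 1) % n))) ∨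
    (∃ p, 1 ≤ p ∧ p ≤ j - 1 ∧ R (x 1) (x (p + 1)) ∧ R (x (j + 1)) (x p)) := by
  classical
  by_contra hno
  push_neg at hno
  obtain ⟨hno1, hno2⟩ := hno
  obtain ⟨E, hE⟩ := exists_equiv hcard hn x hinj
  have hpos : ∀ w : V, x (E.symm w).val = w := by
    intro w
    have := hE (E.symm w)
    rw [E.apply_symm_apply] at this
    exact this.symm
  have hposlt : ∀ w : V, (E.symm w).val < n := fun w => (E.symm w).isLt
  set A : Finset ℕ := (Finset.range n).filter (fun q => 2 ≤ q ∧ R (x 1) (x q)) with hA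
  set B : Finset ℕ := (Finset.range n).filter (fun r => R (x (j + 1)) (x r)) with hB
  set T : Finset ℕ := (Finset.range n).filter
      (fun r => r ≠ j + 1 ∧ ¬ R (x (j + 1)) (x r)) with hT
  -- A injects into T via φ
  have hAT : A.card ≤ T.card := by
    apply Finset.card_le_card_of_injOn
        (fun q => if q ≤ j then q - 1 else (if q = n - 1 then 0 else q + 1))
    · intro q hq
      simp only [Finset.mem_coe] at hq ⊢
      simp only [hA, Finset.mem_filter, Finset.mem_range] at hq
      obtain ⟨hqn, hq2, hqR⟩ := hq
      by_cases hqj : q ≤ j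
      · have h1 : q - 1 + 1 = q := by omega
        have := hno2 (q - 1) (by omega) (by omega) (by rw [h1]; exact hqR)
        simp only [hT, Finset.mem_filter, Finset.mem_range, if_pos hqj]
        exact ⟨by omega, by omega, this⟩
      · by_cases hqn1 : q = n - 1
        · have := hno1 q (by omega) (by omega) hqR
          have hmod : (q + 1) % n = 0 := by
            rw [hqn1]
            have : n - 1 + 1 = n := by omega
            rw [this, Nat.mod_self]
          rw [hmod] at this
          simp only [hT, Finset.mem_filter, Finset.mem_range, if_neg hqj, if_pos hqn1]
          exact ⟨by omega, by omega, this⟩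
        · have := hno1 q (by omega) (by omega) hqR
          have hmod : (q + 1) % n = q + 1 := Nat.mod_eq_of_lt (by omega)
          rw [hmod] at this
          simp only [hT, Finset.mem_filter, Finset.mem_range, if_neg hqj, if_neg hqn1]
          exact ⟨by omega, by omega, this⟩
    · intro q hq q' hq' h
      simp only [Finset.mem_coe, hA, Finset.mem_filter, Finset.mem_range] at hq hq'
      dsimp only at h
      split_ifs at h <;> omega
  -- neighbours of x 1 inject into insert 0 A
  have hA1 : {w | R (x 1) w}.ncard ≤ A.card + 1 := by
    have step : {w | R (x 1) w}.ncard ≤ (insert 0 A).card := by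
      rw [ncard_eq_filter]
      apply Finset.card_le_card_of_injOn (fun w => (E.symm w).val)
      · intro w hw
        simp only [Finset.mem_coe] at hw ⊢
        simp only [Finset.mem_filter, Finset.mem_univ, true_and] at hw
        have hq1 : (E.symm w).val ≠ 1 := by
          intro h1
          have : w = x 1 := by rw [← hpos w, h1]
          rw [this] at hw
          exact hirr _ hw
        rcases Nat.eq_zero_or_pos (E.symm w).val with h0 | h0
        · rw [h0]; exact Finset.mem_insert_self 0 _
        · apply Finset.mem_insert_of_mem
          simp only [hA, Finset.mem_filter, Finset.mem_range]
          refine ⟨hposlt w, by omega, ?_⟩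
          rw [hpos w]; exact hw
      · intro w _ w' _ h
        dsimp only at h
        exact E.symm.injective (Fin.ext h)
    refine le_trans step (le_trans (Finset.card_insert_le 0 A) (by omega))
  have hB1 : {w | R (x (j + 1)) w}.ncard ≤ B.card := by
    rw [ncard_eq_filter]
    apply Finset.card_le_card_of_injOn (fun w => (E.symm w).val)
    · intro w hw
      simp only [Finset.mem_coe] at hw ⊢
      simp only [Finset.mem_filter, Finset.mem_univ, true_and] at hw
      simp only [hB, Finset.mem_filter, Finset.mem_range]
      exact ⟨hposlt w, by rw [hpos w]; exact hw⟩
    · intro w _ w' _ h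
      dsimp only at h
      exact E.symm.injective (Fin.ext h)
  -- T and B are disjoint, both avoid j+1, inside range n
  have hTB : T.card + B.card ≤ n - 1 := by
    have hdisj : Disjoint T B := by
      rw [Finset.disjoint_left]
      intro r hr hrB
      simp only [hT, Finset.mem_filter] at hr
      simp only [hB, Finset.mem_filter] at hrB
      exact hr.2.2 hrB.2
    have hsub : T ∪ B ⊆ (Finset.range n).erase (j + 1) := by
      intro r hr
      rcases Finset.mem_union.1 hr with h | h
      · simp only [hT, Finset.mem_filter, Finset.mem_range] at h
        exact Finset.mem_erase.2 ⟨h.2.1, Finset.mem_range.2 h.1⟩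
      · simp only [hB, Finset.mem_filter, Finset.mem_range] at h
        refine Finset.mem_erase.2 ⟨?_, Finset.mem_range.2 h.1⟩
        intro he
        rw [he] at h
        exact hirr _ h.2
    have h1 := Finset.card_le_card hsub
    rw [Finset.card_union_of_disjoint hdisj] at h1
    have h2 : ((Finset.range n).erase (j + 1)).card = n - 1 := by
      rw [Finset.card_erase_of_mem (Finset.mem_range.2 (by omega)), Finset.card_range]
    omega
  have hd1 := hdeg (x 1)
  have hd2 := hdeg (x (j + 1))
  omega

end BadCross
end Stmt15Aux

namespace Stmt15Aux
section Patterns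

variable {V : Type} [Fintype V]

lemma patB {n : ℕ} (hcard : Fintype.card V = n) (hn : 3 ≤ n)
    (R : V → V → Prop) (hsym : ∀ a b, R a b → R b a)
    (x : ℕ → V) (hinj : AInj (n - 1) x) (hcov : ACov (n - 1) x) (hcyc : UCyc R n x)
    (j p : ℕ) (hj1 : 2 ≤ j) (hjp : j + 1 ≤ p) (hp : p ≤ n - 1)
    (hc1 : R (x 1) (x p)) (hc2 : R (x (j + 1)) (x ((p + 1) % n))) :
    ∃ y : ℕ → V, AInj (n - 1) y ∧ ACov (n - 1) y ∧
      (∀ i, 1 ≤ i → i ≤ n - 1 → R (y i) (y ((i + 1) % n))) ∧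
      y 0 = x 0 ∧ y 1 = x j ∧ y 2 = x (j - 1) := by
  set k := n - 1 with hk
  have hkn : k < n := by omega
  set σ : ℕ → ℕ := fun i =>
    if i = 0 then 0 else if i ≤ j then j + 1 - i else if i ≤ p then p + j + 1 - i else i
    with hσ
  have hσle : ∀ i ≤ k, σ i ≤ k := by
    intro i hi; simp only [hσ]; split_ifs <;> omega
  have hσinj : ∀ i ≤ k, ∀ i' ≤ k, σ i = σ i' → i = i' := by
    intro i hi i' hi' h
    simp only [hσ] at h
    split_ifs at h <;> omega
  refine ⟨fun i => x (σ i), ?_, ?_, ?_, ?_, ?_, ?_⟩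
  · intro i hi i' hi' h
    exact hσinj i hi i' hi' (hinj _ (hσle i hi) _ (hσle i' hi') h)
  · intro v
    obtain ⟨s, hs, hxs⟩ := hcov v
    have hmap : ∀ a, a ∈ Finset.range n → σ a ∈ Finset.range n := by
      intro a ha
      have := hσle a (by have := Finset.mem_range.1 ha; omega)
      exact Finset.mem_range.2 (by omega)
    have hinj2 : ∀ a₁ a₂, a₁ ∈ Finset.range n → a₂ ∈ Finset.range n →
        σ a₁ = σ a₂ → a₁ = a₂ := by
      intro a₁ a₂ h₁ h₂ h
      exact hσinj a₁ (by have := Finset.mem_range.1 h₁; omega) a₂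
        (by have := Finset.mem_range.1 h₂; omega) h
    obtain ⟨i, hi, hσi⟩ := Finset.surj_on_of_inj_on_of_card_le (fun a _ => σ a)
      (fun a ha => hmap a ha) (fun a₁ a₂ h₁ h₂ h => hinj2 a₁ a₂ h₁ h₂ h) le_rfl
      s (Finset.mem_range.2 (by omega))
    exact ⟨i, by have := Finset.mem_range.1 hi; omega, by rw [hσi] at hxs; exact hxs⟩
  · intro i hi1 hik
    dsimp only
    -- helper adjacency facts
    have adjF : ∀ t, t + 1 ≤ k → R (x t) (x (t + 1)) := by
      intro t ht
      have := hcyc t (by omega)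
      rwa [Nat.mod_eq_of_lt (by omega)] at this
    have adjB : ∀ t, t + 1 ≤ k → R (x (t + 1)) (x t) := fun t ht => hsym _ _ (adjF t ht)
    have adjW : R (x k) (x 0) := by
      have := hcyc k le_rfl
      have h0 : (k + 1) % n = 0 := by
        have : k + 1 = n := by omega
        rw [this, Nat.mod_self]
      rwa [h0] at this
    by_cases hcase1 : i ≤ j - 1
    · -- σ i = j+1-i, σ (i+1) = j-i
      have hm : (i + 1) % n = i + 1 := Nat.mod_eq_of_lt (by omega)
      have e1 : σ i = j + 1 - i := by
        simp only [hσ]; rw [if_neg (by omega), if_pos (by omega)]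
      have e2 : σ (i + 1) = j - i := by
        simp only [hσ]; rw [if_neg (by omega), if_pos (by omega)]
        omega
      rw [hm, e1, e2]
      have := adjB (j - i) (by omega)
      have e3 : j - i + 1 = j + 1 - i := by omega
      rwa [e3] at this
    · by_cases hcase2 : i = j
      · have hm : (i + 1) % n = i + 1 := Nat.mod_eq_of_lt (by omega)
        have e1 : σ i = 1 := by
          simp only [hσ]; rw [if_neg (by omega), if_pos (by omega)]; omega
        have e2 : σ (i + 1) = p := by
          simp only [hσ]; rw [if_neg (by omega), if_neg (by omega), if_pos (by omega)]
          omega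
        rw [hm, e1, e2]
        exact hc1
      · by_cases hcase3 : i ≤ p - 1
        · -- j+1 ≤ i ≤ p-1
          have hm : (i + 1) % n = i + 1 := Nat.mod_eq_of_lt (by omega)
          have e1 : σ i = p + j + 1 - i := by
            simp only [hσ]; rw [if_neg (by omega), if_neg (by omega), if_pos (by omega)]
          have e2 : σ (i + 1) = p + j - i := by
            simp only [hσ]; rw [if_neg (by omega), if_neg (by omega), if_pos (by omega)]
            omega
          rw [hm, e1, e2]
          have := adjB (p + j - i) (by omega)
          have e3 : p + j - i + 1 = p + j + 1 - i := by omega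
          rwa [e3] at this
        · by_cases hcase4 : i = p
          · -- here p < k (if p = k then i = k is the wrap, handled below as i = k = p)
            by_cases hpk : p = k
            · -- i = p = k : wrap
              have hm : (i + 1) % n = 0 := by
                have : i + 1 = n := by omega
                rw [this, Nat.mod_self]
              have e1 : σ i = j + 1 := by
                simp only [hσ]; rw [if_neg (by omega), if_neg (by omega), if_pos (by omega)]
                omega
              have e2 : σ 0 = 0 := by simp [hσ]
              rw [hm, e1, e2]
              have hmod : (p + 1) % n = 0 := by
                have : p + 1 = n := by omega
                rw [this, Nat.mod_self]
              rw [hmod] at hc2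
              exact hc2
            · have hm : (i + 1) % n = i + 1 := Nat.mod_eq_of_lt (by omega)
              have e1 : σ i = j + 1 := by
                simp only [hσ]; rw [if_neg (by omega), if_neg (by omega), if_pos (by omega)]
                omega
              have e2 : σ (i + 1) = i + 1 := by
                simp only [hσ]; rw [if_neg (by omega), if_neg (by omega), if_neg (by omega)]
              rw [hm, e1, e2]
              have hmod : (p + 1) % n = p + 1 := Nat.mod_eq_of_lt (by omega)
              rw [hmod] at hc2
              have e3 : i + 1 = p + 1 := by omega
              rw [e3]
              exact hc2
          · -- p+1 ≤ i
            by_cases hik2 : i = k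
            · -- wrap, p < k
              have hm : (i + 1) % n = 0 := by
                have : i + 1 = n := by omega
                rw [this, Nat.mod_self]
              have e1 : σ i = i := by
                simp only [hσ]; rw [if_neg (by omega), if_neg (by omega), if_neg (by omega)]
              have e2 : σ 0 = 0 := by simp [hσ]
              rw [hm, e1, e2, hik2]
              exact adjW
            · have hm : (i + 1) % n = i + 1 := Nat.mod_eq_of_lt (by omega)
              have e1 : σ i = i := by
                simp only [hσ]; rw [if_neg (by omega), if_neg (by omega), if_neg (by omega)]
              have e2 : σ (i + 1) = i + 1 := by
                simp only [hσ]; rw [if_neg (by omega), if_neg (by omega), if_neg (by omega)]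
              rw [hm, e1, e2]
              exact adjF i (by omega)
  · show x (σ 0) = x 0
    have e : σ 0 = 0 := by simp [hσ]
    rw [e]
  · show x (σ 1) = x j
    have e : σ 1 = j := by
      simp only [hσ]; rw [if_neg (by omega), if_pos (by omega)]; omega
    rw [e]
  · show x (σ 2) = x (j - 1)
    have e : σ 2 = j - 1 := by
      simp only [hσ]; rw [if_neg (by omega), if_pos (by omega)]; omega
    rw [e]

end Patterns
end Stmt15Aux

namespace Stmt15Aux
section Patterns2

variable {V : Type} [Fintype V]

lemma patB2 {n : ℕ} (hcard : Fintype.card V = n) (hn : 3 ≤ n)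
    (R : V → V → Prop) (hsym : ∀ a b, R a b → R b a)
    (x : ℕ → V) (hinj : AInj (n - 1) x) (hcov : ACov (n - 1) x) (hcyc : UCyc R n x)
    (j p : ℕ) (hj1 : 2 ≤ j) (hj2 : j ≤ n - 2) (hp1 : 1 ≤ p) (hp2 : p ≤ j - 1)
    (hc1 : R (x 1) (x (p + 1))) (hc2 : R (x (j + 1)) (x p)) :
    ∃ y : ℕ → V, AInj (n - 1) y ∧ ACov (n - 1) y ∧
      (∀ i, 1 ≤ i → i ≤ n - 1 → R (y i) (y ((i + 1) % n))) ∧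
      y 0 = x j ∧ y 1 = x 0 ∧ y 2 = x (n - 1) := by
  set k := n - 1 with hk
  have hkn : k < n := by omega
  set σ : ℕ → ℕ := fun i =>
    if i = 0 then j else if i = 1 then 0 else if i ≤ n - j then n + 1 - i
    else if i ≤ n - j + p then n - j + p + 1 - i else i - (n - j)
    with hσ
  have hσle : ∀ i ≤ k, σ i ≤ k := by
    intro i hi; simp only [hσ]; split_ifs <;> omega
  have hσinj : ∀ i ≤ k, ∀ i' ≤ k, σ i = σ i' → i = i' := by
    intro i hi i' hi' h
    simp only [hσ] at h
    split_ifs at h <;> omega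
  have adjF : ∀ t, t + 1 ≤ k → R (x t) (x (t + 1)) := by
    intro t ht
    have := hcyc t (by omega)
    rwa [Nat.mod_eq_of_lt (by omega)] at this
  have adjB : ∀ t, t + 1 ≤ k → R (x (t + 1)) (x t) := fun t ht => hsym _ _ (adjF t ht)
  have adjW : R (x k) (x 0) := by
    have := hcyc k le_rfl
    have h0 : (k + 1) % n = 0 := by
      have : k + 1 = n := by omega
      rw [this, Nat.mod_self]
    rwa [h0] at this
  refine ⟨fun i => x (σ i), ?_, ?_, ?_, ?_, ?_, ?_⟩
  · intro i hi i' hi' h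
    exact hσinj i hi i' hi' (hinj _ (hσle i hi) _ (hσle i' hi') h)
  · intro v
    obtain ⟨s, hs, hxs⟩ := hcov v
    have hmap : ∀ a, a ∈ Finset.range n → σ a ∈ Finset.range n := by
      intro a ha
      have := hσle a (by have := Finset.mem_range.1 ha; omega)
      exact Finset.mem_range.2 (by omega)
    have hinj2 : ∀ a₁ a₂, a₁ ∈ Finset.range n → a₂ ∈ Finset.range n →
        σ a₁ = σ a₂ → a₁ = a₂ := by
      intro a₁ a₂ h₁ h₂ h
      exact hσinj a₁ (by have := Finset.mem_range.1 h₁; omega) a₂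
        (by have := Finset.mem_range.1 h₂; omega) h
    obtain ⟨i, hi, hσi⟩ := Finset.surj_on_of_inj_on_of_card_le (fun a _ => σ a)
      (fun a ha => hmap a ha) (fun a₁ a₂ h₁ h₂ h => hinj2 a₁ a₂ h₁ h₂ h) le_rfl
      s (Finset.mem_range.2 (by omega))
    exact ⟨i, by have := Finset.mem_range.1 hi; omega, by rw [hσi] at hxs; exact hxs⟩
  · intro i hi1 hik
    dsimp only
    by_cases hik2 : i = k
    · -- wrap
      have hm : (i + 1) % n = 0 := by
        have : i + 1 = n := by omega
        rw [this, Nat.mod_self]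
      have e2 : σ 0 = j := by simp [hσ]
      by_cases hpj : n - j + p = k
      · have e1 : σ i = 1 := by
          simp only [hσ]
          rw [if_neg (by omega), if_neg (by omega), if_neg (by omega), if_pos (by omega)]
          omega
        rw [hm, e1, e2]
        have e3 : p + 1 = j := by omega
        rwa [e3] at hc1
      · have e1 : σ i = j - 1 := by
          simp only [hσ]
          rw [if_neg (by omega), if_neg (by omega), if_neg (by omega), if_neg (by omega)]
          omega
        rw [hm, e1, e2]
        have := adjF (j - 1) (by omega)
        have e3 : j - 1 + 1 = j := by omega
        rwa [e3] at this
    · -- i < k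
      have hikk : i < k := by omega
      have hm : (i + 1) % n = i + 1 := Nat.mod_eq_of_lt (by omega)
      rw [hm]
      by_cases hi1' : i = 1
      · have e1 : σ i = 0 := by
          simp only [hσ]; rw [if_neg (by omega), if_pos hi1']
        have e2 : σ (i + 1) = k := by
          simp only [hσ]
          rw [if_neg (by omega), if_neg (by omega), if_pos (by omega)]
          omega
        rw [e1, e2]
        exact hsym _ _ adjW
      · by_cases hc3 : i ≤ n - j - 1
        · -- 2 ≤ i ≤ n-j-1
          have e1 : σ i = n + 1 - i := by
            simp only [hσ]; rw [if_neg (by omega), if_neg (by omega), if_pos (by omega)]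
          have e2 : σ (i + 1) = n - i := by
            simp only [hσ]; rw [if_neg (by omega), if_neg (by omega), if_pos (by omega)]
            omega
          rw [e1, e2]
          have := adjB (n - i) (by omega)
          have e3 : n - i + 1 = n + 1 - i := by omega
          rwa [e3] at this
        · by_cases hc4 : i = n - j
          · have e1 : σ i = j + 1 := by
              simp only [hσ]; rw [if_neg (by omega), if_neg (by omega), if_pos (by omega)]
              omega
            have e2 : σ (i + 1) = p := by
              simp only [hσ]
              rw [if_neg (by omega), if_neg (by omega), if_neg (by omega), if_pos (by omega)]
              omega
            rw [e1, e2]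
            exact hc2
          · by_cases hc5 : i ≤ n - j + p - 1
            · -- n-j+1 ≤ i ≤ n-j+p-1
              have e1 : σ i = n - j + p + 1 - i := by
                simp only [hσ]
                rw [if_neg (by omega), if_neg (by omega), if_neg (by omega), if_pos (by omega)]
              have e2 : σ (i + 1) = n - j + p - i := by
                simp only [hσ]
                rw [if_neg (by omega), if_neg (by omega), if_neg (by omega), if_pos (by omega)]
                omega
              rw [e1, e2]
              have := adjB (n - j + p - i) (by omega)
              have e3 : n - j + p - i + 1 = n - j + p + 1 - i := by omega
              rwa [e3] at this
            · by_cases hc6 : i = n - j + p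
              · have e1 : σ i = 1 := by
                  simp only [hσ]
                  rw [if_neg (by omega), if_neg (by omega), if_neg (by omega), if_pos (by omega)]
                  omega
                have e2 : σ (i + 1) = p + 1 := by
                  simp only [hσ]
                  rw [if_neg (by omega), if_neg (by omega), if_neg (by omega), if_neg (by omega)]
                  omega
                rw [e1, e2]
                exact hc1
              · -- n-j+p+1 ≤ i ≤ k-1
                have e1 : σ i = i - (n - j) := by
                  simp only [hσ]
                  rw [if_neg (by omega), if_neg (by omega), if_neg (by omega), if_neg (by omega)]
                have e2 : σ (i + 1) = i + 1 - (n - j) := by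
                  simp only [hσ]
                  rw [if_neg (by omega), if_neg (by omega), if_neg (by omega), if_neg (by omega)]
                rw [e1, e2]
                have := adjF (i - (n - j)) (by omega)
                have e3 : i - (n - j) + 1 = i + 1 - (n - j) := by omega
                rwa [e3] at this
  · show x (σ 0) = x j
    have e : σ 0 = j := by simp [hσ]
    rw [e]
  · show x (σ 1) = x 0
    have e : σ 1 = 0 := by simp [hσ]
    rw [e]
  · show x (σ 2) = x (n - 1)
    have e : σ 2 = n - 1 := by
      simp only [hσ]; rw [if_neg (by omega), if_neg (by omega), if_pos (by omega)]
      omega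
    rw [e]

end Patterns2
end Stmt15Aux

namespace Stmt15Aux
section Finish

variable {V : Type} [Fintype V] {c : ℕ}

lemma mod_shift (n i q : ℕ) : ((i + 1) % n + q) % n = ((i + q) % n + 1) % n := by
  rw [Nat.mod_add_mod, Nat.mod_add_mod]
  congr 1
  omega

lemma finish {n : ℕ} (hcard : Fintype.card V = n) (hn : 3 ≤ n)
    (M : HCMultigraph V (Fin c))
    (y : ℕ → V) (hinj : AInj (n - 1) y) (hcov : ACov (n - 1) y)
    (f : ℕ → Fin c)
    (hedge : ∀ i, i ≤ n - 1 → ∃ ed ∈ M.EdgesBetween (y i) (y ((i + 1) % n)), M.col ed = f i)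
    (hstep : ∀ i < n - 1, f i ≠ f (i + 1)) (hwrap : f (n - 1) ≠ f 0) :
    ∃ (k : ℕ) (x : ℕ → V) (e : ℕ → M.E),
      M.IsHCycle (fun a b => a ≠ b) k x e ∧ ∀ v : V, ∃ i ≤ k, x i = v := by
  classical
  set k := n - 1 with hk
  choose ed hed1 hed2 using hedge
  refine ⟨k, y, fun i => if h : i ≤ k then ed i h else ed 0 (by omega),
    ⟨hinj, ?_, ?_, ?_, ?_⟩, hcov⟩
  · intro i hi
    dsimp only
    rw [dif_pos (by omega : i ≤ k)]
    have := hed1 i (by omega)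
    rwa [Nat.mod_eq_of_lt (by omega : i + 1 < n)] at this
  · dsimp only
    rw [dif_pos (le_refl k)]
    have := hed1 k le_rfl
    have h0 : (k + 1) % n = 0 := by
      have : k + 1 = n := by omega
      rw [this, Nat.mod_self]
    rwa [h0] at this
  · intro i hi
    dsimp only
    rw [dif_pos (by omega : i ≤ k), dif_pos (by omega : i + 1 ≤ k),
      hed2 i (by omega), hed2 (i + 1) (by omega)]
    exact hstep i hi
  · dsimp only
    rw [dif_pos (le_refl k), dif_pos (by omega : 0 ≤ k), hed2 k le_rfl, hed2 0 (by omega)]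
    exact hwrap

end Finish
end Stmt15Aux

open Stmt15Aux in
theorem stmt15 {V : Type} [Fintype V] (c : ℕ) (hc : 3 ≤ c)
    (M : HCMultigraph V (Fin c))
    (h2 : ∀ u : V, ∃ e ∈ M.Incident u, ∃ f ∈ M.Incident u, M.col e ≠ M.col f)
    (h3 : ∃ u : V, ∃ e ∈ M.Incident u, ∃ f ∈ M.Incident u, ∃ g ∈ M.Incident u,
      M.col e ≠ M.col f ∧ M.col e ≠ M.col g ∧ M.col f ≠ M.col g)
    (hdeg : ∀ x : V, Fintype.card V + 1 ≤ 2 * M.dynDegree (fun a b => a ≠ b) x) :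
    ∃ (k : ℕ) (x : ℕ → V) (e : ℕ → M.E),
      M.IsHCycle (fun a b => a ≠ b) k x e ∧ ∀ v : V, ∃ i ≤ k, x i = v := by
  classical
  obtain ⟨u₀, ee, hee, ff, hff, gg, hgg, hef, heg, hfg⟩ := h3
  set n := Fintype.card V with hn'
  have hcard : Fintype.card V = n := hn'.symm
  set R : V → V → Prop := fun u v => M.DynamicEdgeSet (fun a b : Fin c => a ≠ b) u v with hR
  have hsym : ∀ a b, R a b → R b a := fun a b h => dyn_symm M h
  have hirr : ∀ a, ¬ R a a := fun a h => dyn_irrefl M a h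
  have hdegR : ∀ v, n + 1 ≤ 2 * {w | R v w}.ncard := fun v => hdeg v
  have hn3 : 3 ≤ n := by
    have h1 : {w | R u₀ w} ⊂ Set.univ := by
      rw [Set.ssubset_univ_iff]
      intro h
      have h2' : u₀ ∈ {w | R u₀ w} := by rw [h]; trivial
      exact hirr u₀ h2'
    have h2' := Set.ncard_lt_ncard h1 (Set.toFinite _)
    rw [Set.ncard_univ, Nat.card_eq_fintype_card] at h2'
    have := hdegR u₀
    omega
  have hn0 : 0 < n := by omega
  set k := n - 1 with hk
  have hk2 : 2 ≤ k := by omega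
  obtain ⟨x, hinj, hcov, hcyc⟩ := dirac hcard hn3 R hsym hirr hdegR
  set L : ℕ → Set (Fin c) := fun i => colSet M (x i) (x ((i + 1) % n)) with hL
  have h2L : ∀ i ≤ k, ∃ a ∈ L i, ∃ b ∈ L i, a ≠ b := by
    intro i hi
    exact (dyn_iff M _ _).1 (hcyc i hi)
  by_cases hall : ∀ i ≤ k, L i ⊆ L ((i + 1) % n)
  · -- all lists equal
    have hEq : ∀ i ≤ k, L i = L 0 := all_eq_of_sub hk hn3 L hall
    obtain ⟨a, haS, b, hbS, hab⟩ := h2L 0 (by omega)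
    by_cases hthree : ∃ d ∈ L 0, d ≠ a ∧ d ≠ b
    · -- three colors available everywhere
      obtain ⟨d, hdS, hda, hdb⟩ := hthree
      obtain ⟨f, hfmem, hfstep, hfwrap⟩ :=
        cyc_color_three hk2 (L 0) a b d haS hbS hdS hab hda.symm hdb.symm
      apply finish hcard hn3 M x hinj hcov f _ hfstep hfwrap
      intro i hi
      have : f i ∈ L i := by rw [hEq i hi]; exact hfmem i hi
      obtain ⟨ed, hed, hcol⟩ := this
      exact ⟨ed, hed, hcol⟩
    · -- BAD CASE : all lists are the same 2-element set {a,b}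
      have hSab : ∀ z ∈ L 0, z = a ∨ z = b := by
        intro z hz
        by_contra hcon
        push_neg at hcon
        exact hthree ⟨z, hz, hcon.1, hcon.2⟩
      obtain ⟨q, hq, hxq⟩ := hcov u₀
      obtain ⟨hyinj, hycov, hycyc⟩ := rot hn3 R x hinj hcov hcyc q
      set y : ℕ → V := fun i => x ((i + q) % n) with hy
      have hy0 : y 0 = u₀ := by
        simp only [hy, Nat.zero_add]
        rw [Nat.mod_eq_of_lt (by omega)]
        exact hxq
      have hSy : ∀ i ≤ k, colSet M (y i) (y ((i + 1) % n)) = L 0 := by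
        intro i hi
        have harg : ((i + 1) % n + q) % n = ((i + q) % n + 1) % n := mod_shift n i q
        have hstep : colSet M (y i) (y ((i + 1) % n)) = L ((i + q) % n) := by
          simp only [hy, hL]
          rw [harg]
        rw [hstep]
        exact hEq _ (by have := Nat.mod_lt (i + q) hn0; omega)
      have hSy0 : colSet M (y 0) (y 1) = L 0 := by
        have := hSy 0 (by omega)
        rwa [show (0 + 1) % n = 1 by rw [Nat.mod_eq_of_lt (by omega)]] at this
      have hSyk : colSet M (y k) (y 0) = L 0 := by
        have := hSy k le_rfl
        rwa [show (k + 1) % n = 0 by rw [show k + 1 = n by omega, Nat.mod_self]] at this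
      -- find an edge at u₀ whose color avoids L 0
      have hcol3 : ∃ h₀ ∈ M.Incident u₀, M.col h₀ ∉ L 0 := by
        by_cases h1 : M.col ee ∈ L 0
        · by_cases h2' : M.col ff ∈ L 0
          · by_cases h3' : M.col gg ∈ L 0
            · exfalso
              rcases hSab _ h1 with hA | hA <;> rcases hSab _ h2' with hB | hB <;>
                rcases hSab _ h3' with hC | hC <;> simp_all
            · exact ⟨gg, hgg, h3'⟩
          · exact ⟨ff, hff, h2'⟩
        · exact ⟨ee, hee, h1⟩
      obtain ⟨h₀, hh₀, hcc⟩ := hcol3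
      obtain ⟨w, hw⟩ := Sym2.mem_iff_exists.1 (hh₀ : u₀ ∈ M.ends h₀)
      have hwne : w ≠ u₀ := by
        intro h
        apply M.loopless h₀
        rw [hw, h]
        exact Sym2.mk_isDiag_iff.2 rfl
      have hEB : h₀ ∈ M.EdgesBetween u₀ w := hw
      obtain ⟨jj, hjj, hyjj⟩ := hycov w
      have hjj0 : jj ≠ 0 := by intro h; rw [h, hy0] at hyjj; exact hwne hyjj.symm
      have hjj1 : jj ≠ 1 := by
        intro h
        apply hcc
        rw [← hSy0]
        refine ⟨h₀, ?_, rfl⟩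
        have hy1w : y 1 = w := by rw [← h]; exact hyjj
        rw [hy0, hy1w]
        exact hEB
      have hjjk : jj ≠ k := by
        intro h
        apply hcc
        rw [← hSyk]
        refine ⟨h₀, ?_, rfl⟩
        have hykw : y k = w := by rw [← h]; exact hyjj
        rw [hy0, hykw, edgesBetween_comm]
        exact hEB
      have hjj2 : 2 ≤ jj := by omega
      have hjjn2 : jj ≤ n - 2 := by omega
      -- the pigeonhole
      rcases badcross hcard hn3 R hsym hirr hdegR y hyinj jj hjj2 hjjn2 with
        ⟨p, hp1, hp2, hcA, hcB⟩ | ⟨p, hp1, hp2, hcA, hcB⟩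
      · -- pattern B
        obtain ⟨z, hzinj, hzcov, hzcyc, hz0, hz1, hz2⟩ :=
          patB hcard hn3 R hsym y hyinj hycov hycyc jj p hjj2 hp1 hp2 hcA hcB
        set Λ : ℕ → Set (Fin c) := fun i =>
          if i = 0 then {M.col h₀} else colSet M (z i) (z ((i + 1) % n)) with hΛ
        have h2Λ : ∀ i, 1 ≤ i → i ≤ k → ∃ a' ∈ Λ i, ∃ b' ∈ Λ i, a' ≠ b' := by
          intro i hi1 hik
          have := (dyn_iff M _ _).1 (hzcyc i hi1 hik)
          simpa only [hΛ, if_neg (by omega : ¬ (i = 0))] using this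
        have hs0 : M.col h₀ ∈ Λ 0 := by simp [hΛ]
        have hs1 : M.col h₀ ∉ Λ 1 := by
          have hΛ1 : Λ 1 = colSet M (z 1) (z 2) := by
            simp only [hΛ, if_neg (by omega : ¬ (1 = 0))]
            rw [show (1 + 1) % n = 2 by rw [Nat.mod_eq_of_lt (by omega)]]
          rw [hΛ1, hz1, hz2, colSet_comm]
          have := hSy (jj - 1) (by omega)
          rw [show (jj - 1 + 1) % n = jj by rw [show jj - 1 + 1 = jj by omega]; exact Nat.mod_eq_of_lt (by omega)] at this
          rw [this]
          exact hcc
        obtain ⟨f, hfmem, hfstep, hfwrap⟩ := cyc_color hk2 Λ h2Λ (M.col h₀) hs0 hs1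
        apply finish hcard hn3 M z hzinj hzcov f _ hfstep hfwrap
        intro i hi
        by_cases h0 : i = 0
        · subst h0
          have hf0 : f 0 = M.col h₀ := by
            have := hfmem 0 (by omega)
            simpa [hΛ] using this
          refine ⟨h₀, ?_, hf0.symm⟩
          rw [show (0 + 1) % n = 1 by rw [Nat.mod_eq_of_lt (by omega)]]
          rw [hz0, hz1, hy0, hyjj]
          exact hEB
        · have := hfmem i hi
          rw [hΛ] at this
          simp only [if_neg h0] at this
          obtain ⟨ed, hed, hcol⟩ := this
          exact ⟨ed, hed, hcol⟩
      · -- pattern B2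
        obtain ⟨z, hzinj, hzcov, hzcyc, hz0, hz1, hz2⟩ :=
          patB2 hcard hn3 R hsym y hyinj hycov hycyc jj p hjj2 hjjn2 hp1 hp2 hcA hcB
        set Λ : ℕ → Set (Fin c) := fun i =>
          if i = 0 then {M.col h₀} else colSet M (z i) (z ((i + 1) % n)) with hΛ
        have h2Λ : ∀ i, 1 ≤ i → i ≤ k → ∃ a' ∈ Λ i, ∃ b' ∈ Λ i, a' ≠ b' := by
          intro i hi1 hik
          have := (dyn_iff M _ _).1 (hzcyc i hi1 hik)
          simpa only [hΛ, if_neg (by omega : ¬ (i = 0))] using this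
        have hs0 : M.col h₀ ∈ Λ 0 := by simp [hΛ]
        have hs1 : M.col h₀ ∉ Λ 1 := by
          have hΛ1 : Λ 1 = colSet M (z 1) (z 2) := by
            simp only [hΛ, if_neg (by omega : ¬ (1 = 0))]
            rw [show (1 + 1) % n = 2 by rw [Nat.mod_eq_of_lt (by omega)]]
          rw [hΛ1, hz1, hz2]
          rw [show n - 1 = k from rfl]
          rw [← colSet_comm, hSyk]
          exact hcc
        obtain ⟨f, hfmem, hfstep, hfwrap⟩ := cyc_color hk2 Λ h2Λ (M.col h₀) hs0 hs1
        apply finish hcard hn3 M z hzinj hzcov f _ hfstep hfwrap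
        intro i hi
        by_cases h0 : i = 0
        · subst h0
          have hf0 : f 0 = M.col h₀ := by
            have := hfmem 0 (by omega)
            simpa [hΛ] using this
          refine ⟨h₀, ?_, hf0.symm⟩
          rw [show (0 + 1) % n = 1 by rw [Nat.mod_eq_of_lt (by omega)]]
          rw [hz0, hz1, hy0, hyjj, edgesBetween_comm]
          exact hEB
        · have := hfmem i hi
          rw [hΛ] at this
          simp only [if_neg h0] at this
          obtain ⟨ed, hed, hcol⟩ := this
          exact ⟨ed, hed, hcol⟩
  · -- some consecutive lists differ
    push_neg at hall
    obtain ⟨i₀, hi₀, hnotsub⟩ := hall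
    rw [Set.not_subset] at hnotsub
    obtain ⟨s, hsL, hsNot⟩ := hnotsub
    obtain ⟨hyinj, hycov, hycyc⟩ := rot hn3 R x hinj hcov hcyc i₀
    set y : ℕ → V := fun i => x ((i + i₀) % n) with hy
    have hy0 : y 0 = x i₀ := by
      simp only [hy, Nat.zero_add]
      rw [Nat.mod_eq_of_lt (by omega)]
    have hy1 : y 1 = x ((i₀ + 1) % n) := by
      simp only [hy]
      rw [Nat.add_comm 1 i₀]
    have hy2 : y 2 = x ((i₀ + 2) % n) := by
      simp only [hy]
      rw [Nat.add_comm 2 i₀]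
    set Λ : ℕ → Set (Fin c) := fun i => colSet M (y i) (y ((i + 1) % n)) with hΛ
    have hΛ0 : Λ 0 = L i₀ := by
      simp only [hΛ, hL]
      rw [show (0 + 1) % n = 1 by rw [Nat.mod_eq_of_lt (by omega)]]
      rw [hy0, hy1]
    have hΛ1 : Λ 1 = L ((i₀ + 1) % n) := by
      simp only [hΛ, hL]
      rw [show (1 + 1) % n = 2 by rw [Nat.mod_eq_of_lt (by omega)]]
      rw [hy1, hy2, Nat.mod_add_mod, show i₀ + 1 + 1 = i₀ + 2 from by omega]
    have h2Λ : ∀ i, 1 ≤ i → i ≤ k → ∃ a' ∈ Λ i, ∃ b' ∈ Λ i, a' ≠ b' := by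
      intro i hi1 hik
      exact (dyn_iff M _ _).1 (hycyc i hik)
    obtain ⟨f, hfmem, hfstep, hfwrap⟩ := cyc_color hk2 Λ h2Λ s
      (by rw [hΛ0]; exact hsL) (by rw [hΛ1]; exact hsNot)
    apply finish hcard hn3 M y hyinj hycov f _ hfstep hfwrap
    intro i hi
    obtain ⟨ed, hed, hcol⟩ := hfmem i hi
    exact ⟨ed, hed, hcol⟩
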